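/- arXiv:1710.05018 — 3 statements merged into one kernel-verified Lean document; each statement's English description precedes it below -/
import Mathlib

section
/- Let 𝔤 = 𝔤' ⊕ 𝔠 where 𝔤' is a semisimple compact Lie algebra and 𝔠 is central, with an ad-invariant inner product, and let π : 𝔤 → 𝔰𝔬(V) be an injective homomorphism with no nonzero fixed vectors. Let ∇ be the Koszul product on 𝔫 = 𝔤 ⊕ V defined by ⟨∇_a b, c⟩ = ½(⟨[a,b],c⟩ - ⟨[b,c],a⟩ + ⟨[c,a],b⟩). Suppose Y = (Y_𝔤, Y_V) ∈ 𝔫 and D is a skew-symmetric derivation of 𝔫 such that ∇_X Y = D(X) for all X ∈ 𝔫. Then Y_V = 0, i.e., Y lies in the 𝔤-factor. -/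
open scoped RealInnerProductSpace

/-- algebraic core of the main theorem. With `𝔤 = 𝔤' ⊕ 𝔠`
(`𝔤'` compact semisimple, i.e. perfect with ad-invariant inner product, `𝔠` the
center), `π` injective without nonzero fixed vectors, if `Y ∈ 𝔫` and a
skew-symmetric derivation `D` of `𝔫` satisfy `∇_X Y = D(X)` for all `X ∈ 𝔫`,
then the `V`-component of `Y` vanishes. -/
theorem stmt_16
    {V G : Type*}
    [NormedAddCommGroup V] [InnerProductSpace ℝ V] [FiniteDimensional ℝ V]
    [NormedAddCommGroup G] [InnerProductSpace ℝ G] [FiniteDimensional ℝ G]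
    (bg : G →ₗ[ℝ] G →ₗ[ℝ] G)   -- the Lie bracket of 𝔤
    (hbganti : ∀ x y : G, bg y x = -bg x y)
    (hbgjac : ∀ x y z : G, bg x (bg y z) + bg y (bg z x) + bg z (bg x y) = 0)
    (hadinv : ∀ x y z : G, ⟪bg x y, z⟫ = -⟪y, bg x z⟫)
    (π : G →ₗ[ℝ] V →ₗ[ℝ] V)
    (hskew : ∀ (x : G) (v w : V), ⟪π x v, w⟫ = -⟪v, π x w⟫)
    (hhom : ∀ x y : G, π (bg x y) = π x ∘ₗ π y - π y ∘ₗ π x)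
    (hinj : Function.Injective π)
    (hnofix : ∀ v : V, (∀ x : G, π x v = 0) → v = 0)
    -- 𝔤 = 𝔤' ⊕ 𝔠 with 𝔤' a semisimple (perfect) subalgebra and 𝔠 the center
    (G' c : Submodule ℝ G)
    (hG'sub : ∀ x ∈ G', ∀ y ∈ G', bg x y ∈ G')
    (hcenter : ∀ x : G, x ∈ c ↔ ∀ y : G, bg x y = 0)
    (hcompl : IsCompl G' c)
    (hperfect : ∀ x ∈ G',
      x ∈ Submodule.span ℝ {m : G | ∃ a ∈ G', ∃ b ∈ G', m = bg a b})
    -- the Lie bracket, inner product and Koszul product on 𝔫 = 𝔤 ⊕ V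
    (br : V →ₗ[ℝ] V →ₗ[ℝ] G)
    (hbr : ∀ (v w : V) (x : G), ⟪br v w, x⟫ = ⟪π x v, w⟫)
    (B : G × V → G × V → G × V)
    (hB : ∀ a b : G × V, B a b = (br a.2 b.2, (0 : V)))
    (ip : G × V → G × V → ℝ)
    (hip : ∀ a b : G × V, ip a b = ⟪a.1, b.1⟫ + ⟪a.2, b.2⟫)
    (nabla : G × V → G × V → G × V)
    (hKoszul : ∀ a b c' : G × V,
      ip (nabla a b) c' = (1 / 2) * (ip (B a b) c' - ip (B b c') a + ip (B c' a) b))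
    -- a skew-symmetric derivation D with ∇_X Y = D X for all X
    (Y : G × V) (D : G × V →ₗ[ℝ] G × V)
    (hDskew : ∀ a b : G × V, ip (D a) b = -ip a (D b))
    (hDder : ∀ a b : G × V, D (B a b) = B (D a) b + B a (D b))
    (hDY : ∀ X : G × V, nabla X Y = D X) :
    Y.2 = 0 :=  by
  -- Step 1: for every `x : G`, the `V`-component of `D (x,0)` is `-(1/2) π x Y.2`.
  have keyD : ∀ (x : G) (w : V), ⟪(D (x, (0:V))).2, w⟫ = -(1/2) * ⟪π x Y.2, w⟫ := by
    intro x w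
    have h1 := hKoszul (x, (0:V)) Y ((0:G), w)
    rw [hDY] at h1
    simp only [hB, hip] at h1
    simp only [map_zero, LinearMap.zero_apply, inner_zero_left, inner_zero_right,
      add_zero, zero_add] at h1
    rw [hbr] at h1
    linarith
  -- Step 2: from the derivation property, `D (br v w, 0)` has vanishing `V`-component.
  have hDzero : ∀ v w : V, (D (br v w, (0:V))).2 = 0 := by
    intro v w
    have h2 := congrArg Prod.snd (hDder ((0:G), v) ((0:G), w))
    simp only [hB, Prod.snd_add] at h2
    simpa using h2
  -- Step 3: hence `π (br v w) Y.2 = 0` for all `v w`.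
  have hpi0 : ∀ v w : V, π (br v w) Y.2 = 0 := by
    intro v w
    have h3 : ⟪π (br v w) Y.2, π (br v w) Y.2⟫ = 0 := by
      have h4 := keyD (br v w) (π (br v w) Y.2)
      rw [hDzero v w] at h4
      simp only [inner_zero_left] at h4
      linarith
    exact inner_self_eq_zero.mp h3
  -- Step 4: the image of `br` spans `G`.
  set S : Submodule ℝ G := Submodule.span ℝ {m : G | ∃ v w : V, m = br v w} with hS
  have hSbot : Sᗮ = ⊥ := by
    rw [Submodule.eq_bot_iff]
    intro x hx
    have hxperp : ∀ v w : V, ⟪br v w, x⟫ = 0 := by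
      intro v w
      exact (Submodule.mem_orthogonal S x).mp hx _ (Submodule.subset_span ⟨v, w, rfl⟩)
    have hpix : π x = 0 := by
      ext v
      have h5 : (⟪π x v, π x v⟫ : ℝ) = 0 := by
        have := hxperp v (π x v)
        rwa [hbr] at this
      simpa using inner_self_eq_zero.mp h5
    have := hinj (by rw [hpix, map_zero] : π x = π 0)
    simpa using this
  have hStop : S = ⊤ := Submodule.orthogonal_eq_bot_iff.mp hSbot
  -- Step 5: conclude `π x Y.2 = 0` for all `x`, hence `Y.2 = 0`.
  apply hnofix
  intro x
  have hxS : x ∈ S := hStop ▸ Submodule.mem_top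
  have hker : S ≤ LinearMap.ker (LinearMap.flip π Y.2) := by
    rw [Submodule.span_le]
    rintro m ⟨v, w, rfl⟩
    exact hpi0 v w
  exact hker hxS
end

section
/- In the setting of the previous statement (𝔤 = 𝔤' ⊕ 𝔠 with 𝔤' semisimple, π injective without fixed vectors), if Y ∈ 𝔫 and a skew-symmetric derivation D of 𝔫 satisfy ∇_X Y = D(X) for all X ∈ 𝔫, then the component of Y in 𝔤' also vanishes; hence Y ∈ 𝔠, the center of 𝔤. -/
open scoped RealInnerProductSpace

/-- algebraic core of the main theorem. With `𝔤 = 𝔤' ⊕ 𝔠`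
(`𝔤'` compact semisimple, i.e. perfect with ad-invariant inner product, `𝔠` the
center), `π` injective without nonzero fixed vectors, if `Y ∈ 𝔫` and a
skew-symmetric derivation `D` of `𝔫` satisfy `∇_X Y = D(X)` for all `X ∈ 𝔫`,
then also the `𝔤'`-component of `Y` vanishes; hence `Y` lies in the center
`𝔠` of `𝔤` (and its `V`-component is zero). -/
theorem stmt_17
    {V G : Type*}
    [NormedAddCommGroup V] [InnerProductSpace ℝ V] [FiniteDimensional ℝ V]
    [NormedAddCommGroup G] [InnerProductSpace ℝ G] [FiniteDimensional ℝ G]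
    (bg : G →ₗ[ℝ] G →ₗ[ℝ] G)   -- the Lie bracket of 𝔤
    (hbganti : ∀ x y : G, bg y x = -bg x y)
    (hbgjac : ∀ x y z : G, bg x (bg y z) + bg y (bg z x) + bg z (bg x y) = 0)
    (hadinv : ∀ x y z : G, ⟪bg x y, z⟫ = -⟪y, bg x z⟫)
    (π : G →ₗ[ℝ] V →ₗ[ℝ] V)
    (hskew : ∀ (x : G) (v w : V), ⟪π x v, w⟫ = -⟪v, π x w⟫)
    (hhom : ∀ x y : G, π (bg x y) = π x ∘ₗ π y - π y ∘ₗ π x)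
    (hinj : Function.Injective π)
    (hnofix : ∀ v : V, (∀ x : G, π x v = 0) → v = 0)
    -- 𝔤 = 𝔤' ⊕ 𝔠 with 𝔤' a semisimple (perfect) subalgebra and 𝔠 the center
    (G' c : Submodule ℝ G)
    (hG'sub : ∀ x ∈ G', ∀ y ∈ G', bg x y ∈ G')
    (hcenter : ∀ x : G, x ∈ c ↔ ∀ y : G, bg x y = 0)
    (hcompl : IsCompl G' c)
    (hperfect : ∀ x ∈ G',
      x ∈ Submodule.span ℝ {m : G | ∃ a ∈ G', ∃ b ∈ G', m = bg a b})
    -- the Lie bracket, inner product and Koszul product on 𝔫 = 𝔤 ⊕ V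
    (br : V →ₗ[ℝ] V →ₗ[ℝ] G)
    (hbr : ∀ (v w : V) (x : G), ⟪br v w, x⟫ = ⟪π x v, w⟫)
    (B : G × V → G × V → G × V)
    (hB : ∀ a b : G × V, B a b = (br a.2 b.2, (0 : V)))
    (ip : G × V → G × V → ℝ)
    (hip : ∀ a b : G × V, ip a b = ⟪a.1, b.1⟫ + ⟪a.2, b.2⟫)
    (nabla : G × V → G × V → G × V)
    (hKoszul : ∀ a b c' : G × V,
      ip (nabla a b) c' = (1 / 2) * (ip (B a b) c' - ip (B b c') a + ip (B c' a) b))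
    -- a skew-symmetric derivation D with ∇_X Y = D X for all X
    (Y : G × V) (D : G × V →ₗ[ℝ] G × V)
    (hDskew : ∀ a b : G × V, ip (D a) b = -ip a (D b))
    (hDder : ∀ a b : G × V, D (B a b) = B (D a) b + B a (D b))
    (hDY : ∀ X : G × V, nabla X Y = D X) :
    Y.2 = 0 ∧ Y.1 ∈ c := by

  obtain ⟨y, u⟩ := Y
  have hzeroV : ∀ v : V, (∀ t : V, ⟪v, t⟫ = 0) → v = 0 := by
    intro v h
    have := h v
    rwa [inner_self_eq_zero] at this
  have hzeroG : ∀ v : G, (∀ t : G, ⟪v, t⟫ = 0) → v = 0 := by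
    intro v h
    have := h v
    rwa [inner_self_eq_zero] at this
  have key : ∀ (x : G) (w : V) (z : G) (t : V),
      ip (D (x, w)) (z, t)
        = (1 / 2) * (⟪br w u, z⟫ - ⟪br u t, x⟫ + ⟪br t w, y⟫) := by
    intro x w z t
    rw [← hDY (x, w), hKoszul, hB, hB, hB, hip, hip, hip]
    simp
  -- Step 1: π z w ⊥ u for all z, w, hence u = 0
  have hpzwu : ∀ (z : G) (w : V), ⟪π z w, u⟫ = 0 := by
    intro z w
    have h1 := hDskew (0, w) (z, 0)
    have h2 : ip ((0 : G), w) (D (z, 0)) = ip (D (z, 0)) ((0 : G), w) := by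
      rw [hip, hip, real_inner_comm ((0:G), w).1, real_inner_comm ((0:G), w).2]
    rw [h2, key, key] at h1
    simp only [map_zero, LinearMap.zero_apply, inner_zero_left, inner_zero_right] at h1
    have e1 : ⟪br w u, z⟫ = ⟪π z w, u⟫ := hbr w u z
    have e2 : ⟪br u w, z⟫ = ⟪π z u, w⟫ := hbr u w z
    have e3 : ⟪π z u, w⟫ = -⟪u, π z w⟫ := hskew z u w
    have e4 : ⟪u, π z w⟫ = ⟪π z w, u⟫ := real_inner_comm (π z w) u
    linarith
  have hu : u = 0 := by
    apply hnofix
    intro z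
    apply hzeroV
    intro t
    have := hskew z u t
    have e4 : ⟪u, π z t⟫ = ⟪π z t, u⟫ := real_inner_comm (π z t) u
    have := hpzwu z t
    linarith
  subst hu
  refine ⟨rfl, ?_⟩
  -- Step 2: the components of D
  have hD1 : ∀ X : G × V, (D X).1 = 0 := by
    rintro ⟨x, w⟩
    apply hzeroG
    intro z
    have h := key x w z 0
    simp only [map_zero, LinearMap.zero_apply, inner_zero_left, inner_zero_right,
      LinearMap.map_zero₂] at h
    rw [hip] at h
    simpa using h
  have hD2 : ∀ X : G × V, (D X).2 = -((1 / 2 : ℝ) • π y X.2) := by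
    rintro ⟨x, w⟩
    have h : (D (x, w)).2 + (1 / 2 : ℝ) • π y w = 0 := by
      apply hzeroV
      intro t
      have h := key x w 0 t
      simp only [map_zero, LinearMap.zero_apply, inner_zero_left, inner_zero_right,
        LinearMap.map_zero₂] at h
      rw [hip] at h
      simp only [inner_zero_left, inner_zero_right] at h
      have e1 : ⟪br t w, y⟫ = ⟪π y t, w⟫ := hbr t w y
      have e2 : ⟪π y t, w⟫ = -⟪t, π y w⟫ := hskew y t w
      have e3 : ⟪t, π y w⟫ = ⟪π y w, t⟫ := real_inner_comm (π y w) t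
      rw [inner_add_left, real_inner_smul_left]
      linarith
    have := eq_neg_of_add_eq_zero_left h
    simpa using this
  -- Step 3: the bracket identity from the derivation property
  have hbrpi : ∀ w w' : V, br (π y w) w' + br w (π y w') = 0 := by
    intro w w'
    have h := congrArg Prod.fst (hDder (0, w) (0, w'))
    rw [hD1] at h
    rw [hB (D ((0 : G), w)), hB _ (D ((0 : G), w'))] at h
    simp only [Prod.fst_add] at h
    rw [hD2 ((0 : G), w), hD2 ((0 : G), w')] at h
    simp only [map_neg, map_smul, LinearMap.neg_apply, LinearMap.smul_apply,
      LinearMap.map_smul₂, LinearMap.map_neg₂] at h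
    have h2 : (-(1 / 2 : ℝ)) • (br (π y w) w' + br w (π y w')) = 0 := by
      rw [smul_add]
      simp only [neg_smul] at h ⊢
      rw [← h]
    rcases smul_eq_zero.mp h2 with h3 | h3
    · norm_num at h3
    · exact h3
  -- Step 4: bg z y = 0 for all z
  have hbgzy : ∀ z : G, bg z y = 0 := by
    intro z
    apply hinj
    rw [map_zero]
    apply LinearMap.ext
    intro w
    rw [hhom]
    simp only [LinearMap.sub_apply, LinearMap.comp_apply, LinearMap.zero_apply]
    apply hzeroV
    intro w'
    have h := congrArg (fun g => ⟪g, z⟫) (hbrpi w w')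
    simp only [inner_add_left, inner_zero_left] at h
    have e1 : ⟪br (π y w) w', z⟫ = ⟪π z (π y w), w'⟫ := hbr (π y w) w' z
    have e2 : ⟪br w (π y w'), z⟫ = ⟪π z w, π y w'⟫ := hbr w (π y w') z
    have e3 : ⟪π y (π z w), w'⟫ = -⟪π z w, π y w'⟫ := hskew y (π z w) w'
    rw [inner_sub_left]
    linarith
  rw [hcenter]
  intro z
  rw [hbganti z y, hbgzy z, neg_zero]
end

section
/- Conversely, for every Y ∈ 𝔠 (the center of 𝔤) there exists a skew-symmetric derivation D of 𝔫 = 𝔤 ⊕ V such that ∇_X Y = D(X) for all X ∈ 𝔫; explicitly, one may take D to be zero on 𝔤 and equal to -½ π(Y) on V. -/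
open scoped RealInnerProductSpace

/-- conversely, for every `Y` in the center `𝔠` of `𝔤` there is a
skew-symmetric derivation `D` of `𝔫 = 𝔤 ⊕ V` with `∇_X Y = D(X)` for all
`X ∈ 𝔫`; explicitly `D(z,v) = (0, -½ π(Y)v)`. -/
theorem stmt_18
    {V G : Type*}
    [NormedAddCommGroup V] [InnerProductSpace ℝ V] [FiniteDimensional ℝ V]
    [NormedAddCommGroup G] [InnerProductSpace ℝ G] [FiniteDimensional ℝ G]
    (bg : G →ₗ[ℝ] G →ₗ[ℝ] G)   -- the Lie bracket of 𝔤
    (hbganti : ∀ x y : G, bg y x = -bg x y)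
    (hbgjac : ∀ x y z : G, bg x (bg y z) + bg y (bg z x) + bg z (bg x y) = 0)
    (hadinv : ∀ x y z : G, ⟪bg x y, z⟫ = -⟪y, bg x z⟫)
    (π : G →ₗ[ℝ] V →ₗ[ℝ] V)
    (hskew : ∀ (x : G) (v w : V), ⟪π x v, w⟫ = -⟪v, π x w⟫)
    (hhom : ∀ x y : G, π (bg x y) = π x ∘ₗ π y - π y ∘ₗ π x)
    -- the Lie bracket, inner product and Koszul product on 𝔫 = 𝔤 ⊕ V
    (br : V →ₗ[ℝ] V →ₗ[ℝ] G)
    (hbr : ∀ (v w : V) (x : G), ⟪br v w, x⟫ = ⟪π x v, w⟫)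
    (B : G × V → G × V → G × V)
    (hB : ∀ a b : G × V, B a b = (br a.2 b.2, (0 : V)))
    (ip : G × V → G × V → ℝ)
    (hip : ∀ a b : G × V, ip a b = ⟪a.1, b.1⟫ + ⟪a.2, b.2⟫)
    (nabla : G × V → G × V → G × V)
    (hKoszul : ∀ a b c : G × V,
      ip (nabla a b) c = (1 / 2) * (ip (B a b) c - ip (B b c) a + ip (B c a) b))
    -- Y is central in 𝔤
    (Y : G) (hY : ∀ x : G, bg Y x = 0) :
    ∃ D : G × V →ₗ[ℝ] G × V,
      (∀ (z : G) (v : V), D (z, v) = ((0 : G), -(1 / 2 : ℝ) • π Y v)) ∧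
      (∀ a b : G × V, ip (D a) b = -ip a (D b)) ∧
      (∀ a b : G × V, D (B a b) = B (D a) b + B a (D b)) ∧
      (∀ X : G × V, nabla X (Y, (0 : V)) = D X) := by
  set D : G × V →ₗ[ℝ] G × V :=
    (0 : G × V →ₗ[ℝ] G).prod (((-(1/2:ℝ)) • π Y) ∘ₗ LinearMap.snd ℝ G V) with hD
  have hDval : ∀ (z : G) (v : V), D (z, v) = ((0 : G), -(1 / 2 : ℝ) • π Y v) := by
    intro z v; simp [hD]
  have hDval' : ∀ a : G × V, D a = ((0 : G), -(1 / 2 : ℝ) • π Y a.2) := by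
    intro a; simpa using hDval a.1 a.2
  -- key commutation: br (π Y v) w = - br v (π Y w)
  have hcomm : ∀ v w : V, br (π Y v) w + br v (π Y w) = 0 := by
    intro v w
    have h : ∀ x : G, ⟪br (π Y v) w + br v (π Y w), x⟫ = 0 := by
      intro x
      have hbx : bg x Y = 0 := by rw [hbganti Y x, hY x, neg_zero]
      have h0 : π x ∘ₗ π Y - π Y ∘ₗ π x = 0 := by
        rw [← hhom, hbx, map_zero]
      have h1 : π x (π Y v) = π Y (π x v) := by
        have := congrArg (fun f => (f : V →ₗ[ℝ] V) v) h0
        simpa [sub_eq_zero] using this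
      rw [inner_add_left, hbr, hbr, h1, hskew Y (π x v) w]
      ring
    have := h (br (π Y v) w + br v (π Y w))
    exact inner_self_eq_zero.mp this
  refine ⟨D, hDval, ?_, ?_, ?_⟩
  · intro a b
    rw [hip, hip, hDval' a, hDval' b]
    simp only [inner_zero_left, inner_zero_right, zero_add]
    rw [real_inner_smul_left, real_inner_smul_right, hskew Y a.2 b.2]
    ring
  · intro a b
    rw [hB, hDval' a, hDval' b, hB, hB, hDval']
    simp only [map_zero, LinearMap.zero_apply, Prod.mk_add_mk, add_zero]
    refine Prod.ext ?_ (by simp)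
    have := hcomm a.2 b.2
    simp only [map_smul, LinearMap.smul_apply, smul_eq_mul]
    rw [← smul_add, this, smul_zero]
  · intro X
    have key : ∀ c : G × V, ip (nabla X (Y, (0:V))) c = ip (D X) c := by
      intro c
      rw [hKoszul]
      rw [hB, hB, hB, hip, hip, hip, hip, hDval' X]
      simp only [map_zero, LinearMap.zero_apply, inner_zero_left, inner_zero_right, add_zero,
        zero_add]
      rw [hbr c.2 X.2 Y, hskew Y c.2 X.2, real_inner_smul_left,
        real_inner_comm (π Y X.2) c.2, real_inner_comm c.2 (π Y X.2)]
      ring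
    have hdiff := key (nabla X (Y, (0:V)) - D X)
    set u := nabla X (Y, (0:V))
    set w := D X
    have : ⟪u.1 - w.1, u.1 - w.1⟫ + ⟪u.2 - w.2, u.2 - w.2⟫ = 0 := by
      have h1 := hip u (u - w)
      have h2 := hip w (u - w)
      have : ⟪u.1, (u-w).1⟫ + ⟪u.2, (u-w).2⟫ = ⟪w.1, (u-w).1⟫ + ⟪w.2, (u-w).2⟫ := by
        rw [← h1, ← h2, hdiff]
      simp only [Prod.fst_sub, Prod.snd_sub] at this ⊢
      rw [inner_sub_left, inner_sub_left]
      linarith [this]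
    have h1 : u.1 - w.1 = 0 ∧ u.2 - w.2 = 0 := by
      constructor
      · refine inner_self_eq_zero.mp (le_antisymm ?_ real_inner_self_nonneg)
        nlinarith [real_inner_self_nonneg (x := u.2 - w.2)]
      · refine inner_self_eq_zero.mp (le_antisymm ?_ real_inner_self_nonneg)
        nlinarith [real_inner_self_nonneg (x := u.1 - w.1)]
    exact Prod.ext (sub_eq_zero.mp h1.1) (sub_eq_zero.mp h1.2)
end
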